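/- arXiv:math-ph/9806007 — 2 statements merged into one kernel-verified Lean document; each statement's English description precedes it below -/
import Mathlib

section
/- If ρ : ℝ≥0 → ℝ≥0 is C¹ and satisfies K⁻¹(Q+k)^q ≤ ρ(Q) + 2Q ρ'(Q) ≤ K(Q+k)^q for all Q ≥ 0, with K ≥ 1, k ≥ 0, q ≥ 0, then there exists a constant K' > 0 such that ρ(Q) ≥ K'⁻¹ (Q+k)^q for all Q ≥ 0. -/
open Real Set

/-- Under condition [U], there is `K' > 0` with
`ρ(Q) ≥ K'⁻¹ (Q+k)^q` for all `Q ≥ 0`. -/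
theorem nonlinear_hodge_rho_lower_bound
    (ρ ρd : ℝ → ℝ) (K k q : ℝ)
    (hK : 1 ≤ K) (hk : 0 ≤ k) (hq : 0 ≤ q)
    (hderiv : ∀ Q : ℝ, 0 ≤ Q → HasDerivAt ρ (ρd Q) Q)
    (hcont : ContinuousOn ρd (Set.Ici (0 : ℝ)))
    (hpos : ∀ Q : ℝ, 0 ≤ Q → 0 < ρ Q)
    (hUlow : ∀ Q : ℝ, 0 ≤ Q → K⁻¹ * (Q + k) ^ q ≤ ρ Q + 2 * Q * ρd Q)
    (hUupp : ∀ Q : ℝ, 0 ≤ Q → ρ Q + 2 * Q * ρd Q ≤ K * (Q + k) ^ q) :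
    ∃ K' : ℝ, 0 < K' ∧ ∀ Q : ℝ, 0 ≤ Q → K'⁻¹ * (Q + k) ^ q ≤ ρ Q := by
  have hK0 : (0:ℝ) < K := lt_of_lt_of_le one_pos hK
  have h2q : (0:ℝ) < (2:ℝ) ^ q := Real.rpow_pos_of_pos two_pos q
  have h2q1 : (1:ℝ) ≤ (2:ℝ) ^ q := Real.one_le_rpow one_le_two hq
  refine ⟨4 * K * 2 ^ q, by positivity, ?_⟩
  intro Q hQ
  rcases eq_or_lt_of_le hQ with rfl | hQ'
  · have h := hUlow 0 le_rfl
    have h0 : K⁻¹ * (0 + k) ^ q ≤ ρ 0 := by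
      simpa using h
    have hkq : (0:ℝ) ≤ (0 + k) ^ q := Real.rpow_nonneg (by linarith) q
    have : (4 * K * 2 ^ q)⁻¹ ≤ K⁻¹ := by
      apply inv_anti₀ hK0
      nlinarith
    nlinarith [mul_le_mul_of_nonneg_right this hkq]
  · -- Q > 0
    set a := Q / 2 with ha
    have ha0 : 0 < a := by positivity
    set m := K⁻¹ * (a + k) ^ q / (2 * Real.sqrt Q) with hm
    have hsQ : 0 < Real.sqrt Q := Real.sqrt_pos.mpr hQ'
    -- monotonicity of f t = √t ρ t - m t on [a, Q]
    have hmono : MonotoneOn (fun t => Real.sqrt t * ρ t - m * t) (Icc a Q) := by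
      apply monotoneOn_of_deriv_nonneg (convex_Icc a Q)
      · apply ContinuousOn.sub
        · exact Real.continuous_sqrt.continuousOn.mul
            (fun t ht => ((hderiv t (le_trans ha0.le ht.1)).continuousAt).continuousWithinAt)
        · exact (continuous_const.mul continuous_id).continuousOn
      · rw [interior_Icc]
        intro x hx
        have hx0 : 0 < x := lt_of_lt_of_le ha0 hx.1.le
        have hd : HasDerivAt (fun t => Real.sqrt t * ρ t)
            (1 / (2 * Real.sqrt x) * ρ x + Real.sqrt x * ρd x) x :=
          (Real.hasDerivAt_sqrt hx0.ne').mul (hderiv x hx0.le)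
        exact (hd.sub ((hasDerivAt_id x).const_mul m)).differentiableAt.differentiableWithinAt
      · rw [interior_Icc]
        intro x hx
        have hx0 : 0 < x := lt_of_lt_of_le ha0 hx.1.le
        have hsx : 0 < Real.sqrt x := Real.sqrt_pos.mpr hx0
        have hd : HasDerivAt (fun t => Real.sqrt t * ρ t)
            (1 / (2 * Real.sqrt x) * ρ x + Real.sqrt x * ρd x) x :=
          (Real.hasDerivAt_sqrt hx0.ne').mul (hderiv x hx0.le)
        have hf : HasDerivAt (fun t => Real.sqrt t * ρ t - m * t)
            (1 / (2 * Real.sqrt x) * ρ x + Real.sqrt x * ρd x - m * 1) x :=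
          hd.sub ((hasDerivAt_id x).const_mul m)
        rw [hf.deriv]
        have hxx : Real.sqrt x * Real.sqrt x = x := Real.mul_self_sqrt hx0.le
        have heq : 1 / (2 * Real.sqrt x) * ρ x + Real.sqrt x * ρd x
            = (ρ x + 2 * x * ρd x) / (2 * Real.sqrt x) := by
          field_simp
          linear_combination (2 * ρd x) * hxx
        have hnum : K⁻¹ * (x + k) ^ q ≤ ρ x + 2 * x * ρd x := hUlow x hx0.le
        have hnum0 : (0:ℝ) ≤ ρ x + 2 * x * ρd x :=
          le_trans (by positivity) hnum
        have hsxQ : Real.sqrt x ≤ Real.sqrt Q := Real.sqrt_le_sqrt hx.2.le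
        have hpow : (a + k) ^ q ≤ (x + k) ^ q :=
          Real.rpow_le_rpow (by linarith) (by linarith [hx.1]) hq
        have h1 : m ≤ K⁻¹ * (x + k) ^ q / (2 * Real.sqrt Q) := by
          apply div_le_div_of_nonneg_right ?_ (by positivity) |>.trans_eq rfl
          · exact mul_le_mul_of_nonneg_left hpow (by positivity)
        have h2 : K⁻¹ * (x + k) ^ q / (2 * Real.sqrt Q) ≤ (ρ x + 2 * x * ρd x) / (2 * Real.sqrt Q) :=
          div_le_div_of_nonneg_right hnum (by positivity)
        have h3 : (ρ x + 2 * x * ρd x) / (2 * Real.sqrt Q) ≤ (ρ x + 2 * x * ρd x) / (2 * Real.sqrt x) :=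
          div_le_div_of_nonneg_left hnum0 (by positivity) (by linarith)
        rw [heq, mul_one]
        linarith
    have hfa : (fun t => Real.sqrt t * ρ t - m * t) a ≤ (fun t => Real.sqrt t * ρ t - m * t) Q :=
      hmono (by constructor <;> [exact le_refl a; linarith]) (by constructor <;> [linarith; exact le_refl Q]) (by linarith)
    simp only at hfa
    have hra : 0 < ρ a := hpos a ha0.le
    have hsa : 0 ≤ Real.sqrt a := Real.sqrt_nonneg a
    -- √Q ρ Q ≥ m * (Q - a) = m * Q/2
    have hkey : m * (Q / 2) ≤ Real.sqrt Q * ρ Q := by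
      have hsplit : m * (Q / 2) = m * Q - m * a := by rw [ha]; ring
      nlinarith [mul_nonneg hsa hra.le]
    have hdivsqrt : Q / Real.sqrt Q = Real.sqrt Q := Real.div_sqrt
    have hmq : m * (Q / 2) = K⁻¹ * (a + k) ^ q * Real.sqrt Q / 4 := by
      rw [hm]
      have hQQ : Real.sqrt Q * Real.sqrt Q = Q := Real.mul_self_sqrt hQ'.le
      field_simp
      linear_combination (-4) * hQQ
    have hρQ : K⁻¹ * (a + k) ^ q / 4 ≤ ρ Q := by
      have := hkey
      rw [hmq] at this
      have := div_le_div_of_nonneg_right this hsQ.le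
      calc K⁻¹ * (a + k) ^ q / 4 = K⁻¹ * (a + k) ^ q * Real.sqrt Q / 4 / Real.sqrt Q := by
            field_simp
        _ ≤ Real.sqrt Q * ρ Q / Real.sqrt Q := this
        _ = ρ Q := by field_simp
    -- (Q+k)^q / 2^q ≤ (a+k)^q
    have hhalf : ((Q + k) / 2) ^ q ≤ (a + k) ^ q :=
      Real.rpow_le_rpow (by positivity) (by rw [ha]; linarith) hq
    have hdiv : ((Q + k) / 2) ^ q = (Q + k) ^ q / 2 ^ q :=
      Real.div_rpow (by linarith : (0:ℝ) ≤ Q + k) (by norm_num : (0:ℝ) ≤ 2) q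
    have hfin : (4 * K * 2 ^ q)⁻¹ * (Q + k) ^ q ≤ K⁻¹ * (a + k) ^ q / 4 := by
      rw [hdiv] at hhalf
      have e : (4 * K * 2 ^ q)⁻¹ * (Q + k) ^ q = K⁻¹ * ((Q + k) ^ q / 2 ^ q) / 4 := by
        rw [mul_inv, mul_inv]; ring
      rw [e]
      have := mul_le_mul_of_nonneg_left hhalf (by positivity : (0:ℝ) ≤ K⁻¹)
      linarith
    linarith
end

section
/- If ρ : ℝ≥0 → ℝ≥0 is C¹ and satisfies K⁻¹(Q+k)^q ≤ ρ(Q) + 2Q ρ'(Q) ≤ K(Q+k)^q for all Q ≥ 0, with K ≥ 1, k ≥ 0, q ≥ 0, then there exists a constant K' > 0 such that ρ(Q) ≤ K' (Q+k)^q for all Q ≥ 0. -/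
open Real Set

/-- Under condition [U], there is `K' > 0` with
`ρ(Q) ≤ K' (Q+k)^q` for all `Q ≥ 0`. -/
theorem nonlinear_hodge_rho_upper_bound
    (ρ ρd : ℝ → ℝ) (K k q : ℝ)
    (hK : 1 ≤ K) (hk : 0 ≤ k) (hq : 0 ≤ q)
    (hderiv : ∀ Q : ℝ, 0 ≤ Q → HasDerivAt ρ (ρd Q) Q)
    (hcont : ContinuousOn ρd (Set.Ici (0 : ℝ)))
    (hpos : ∀ Q : ℝ, 0 ≤ Q → 0 < ρ Q)
    (hUlow : ∀ Q : ℝ, 0 ≤ Q → K⁻¹ * (Q + k) ^ q ≤ ρ Q + 2 * Q * ρd Q)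
    (hUupp : ∀ Q : ℝ, 0 ≤ Q → ρ Q + 2 * Q * ρd Q ≤ K * (Q + k) ^ q) :
    ∃ K' : ℝ, 0 < K' ∧ ∀ Q : ℝ, 0 ≤ Q → ρ Q ≤ K' * (Q + k) ^ q := by
  refine ⟨K, lt_of_lt_of_le one_pos hK, ?_⟩
  set u : ℝ → ℝ := fun Q => Real.sqrt Q * ρ Q - Real.sqrt Q * (K * (Q + k) ^ q) with hu
  -- derivative of u on (0, ∞)
  have hud : ∀ x : ℝ, 0 < x → HasDerivAt u
      ((1 / (2 * Real.sqrt x)) * ρ x + Real.sqrt x * ρd x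
        - ((1 / (2 * Real.sqrt x)) * (K * (x + k) ^ q)
          + Real.sqrt x * (K * (q * (x + k) ^ (q - 1) * 1)))) x := by
    intro x hx
    have hxk : x + k ≠ 0 := by positivity
    have hsq : HasDerivAt Real.sqrt (1 / (2 * Real.sqrt x)) x :=
      Real.hasDerivAt_sqrt hx.ne'
    have hpow : HasDerivAt (fun Q : ℝ => (Q + k) ^ q) (q * (x + k) ^ (q - 1) * 1) x := by
      have := (Real.hasDerivAt_rpow_const (p := q) (Or.inl hxk)).comp x
        ((hasDerivAt_id x).add_const k)
      simpa [Function.comp_def] using this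
    exact (hsq.mul (hderiv x hx.le)).sub (hsq.mul (hpow.const_mul K))
  -- derivative of u is nonpositive on (0, ∞)
  have hud0 : ∀ x ∈ interior (Set.Ici (0:ℝ)), deriv u x ≤ 0 := by
    intro x hx
    rw [interior_Ici, mem_Ioi] at hx
    rw [(hud x hx).deriv]
    have hs : 0 < Real.sqrt x := Real.sqrt_pos.mpr hx
    have hs2 : Real.sqrt x * Real.sqrt x = x := Real.mul_self_sqrt hx.le
    have hE : 0 ≤ (x + k) ^ (q - 1) := Real.rpow_nonneg (by positivity) _
    have hU := hUupp x hx.le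
    have hkey : (2 * Real.sqrt x) *
        ((1 / (2 * Real.sqrt x)) * ρ x + Real.sqrt x * ρd x
          - ((1 / (2 * Real.sqrt x)) * (K * (x + k) ^ q)
            + Real.sqrt x * (K * (q * (x + k) ^ (q - 1) * 1))))
        = ρ x + 2 * x * ρd x - K * (x + k) ^ q
          - 2 * x * (K * (q * (x + k) ^ (q - 1))) := by
      field_simp
      linear_combination (2 * ρd x - 2 * K * (q * (x + k) ^ (q - 1))) * hs2
    nlinarith [mul_nonneg (mul_nonneg (mul_nonneg (by norm_num : (0:ℝ) ≤ 2) hx.le)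
      (le_trans zero_le_one hK)) (mul_nonneg hq hE), hs]
  -- continuity of u on [0, ∞)
  have hcρ : ContinuousOn ρ (Set.Ici 0) := fun x hx =>
    ((hderiv x hx).continuousAt).continuousWithinAt
  have hcpow : ContinuousOn (fun Q : ℝ => (Q + k) ^ q) (Set.Ici 0) := by
    intro x _
    exact (ContinuousAt.rpow_const (by fun_prop) (Or.inr hq)).continuousWithinAt
  have hcu : ContinuousOn u (Set.Ici (0:ℝ)) :=
    ((Real.continuous_sqrt.continuousOn).mul hcρ).sub
      ((Real.continuous_sqrt.continuousOn).mul (continuousOn_const.mul hcpow))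
  have hanti : AntitoneOn u (Set.Ici (0:ℝ)) :=
    antitoneOn_of_deriv_nonpos (convex_Ici 0) hcu
      (fun x hx => by
        rw [interior_Ici, mem_Ioi] at hx
        exact (hud x hx).differentiableAt.differentiableWithinAt) hud0
  intro Q hQ
  rcases eq_or_lt_of_le hQ with h0 | hQpos
  · have := hUupp 0 le_rfl
    subst h0
    simpa using this
  · have h1 : u Q ≤ u 0 := hanti self_mem_Ici hQ hQ
    have h2 : u 0 = 0 := by simp [hu]
    have hs : 0 < Real.sqrt Q := Real.sqrt_pos.mpr hQpos
    have : Real.sqrt Q * ρ Q ≤ Real.sqrt Q * (K * (Q + k) ^ q) := by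
      have := h1; rw [h2] at this; simp only [hu] at this; linarith
    exact le_of_mul_le_mul_left this hs
end
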